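/- Let λ be a strong limit cardinal of countable cofinality. Then the generalized Cantor space λ→2 with the bounded topology has weight exactly λ, and in particular has a dense subset of size λ. -/

import Mathlib

universe u
open Cardinal

/-- The canonical type of order type `λ` representing the cardinal `λ` as a set of "ordinals". -/
abbrev T (lam : Cardinal.{u}) : Type u := lam.ord.ToType

/-- The binary relation on `λ` coded by `z : λ → 2` via the pairing bijection `pair`:
`(a, b) ∈ E_z` iff `z ⟨a,b⟩ = 0` (we use `false` for `0`). -/
def Ez {lam : Cardinal.{u}} (pair : T lam × T lam ≃ T lam) (z : T lam → Bool)
    (a b : T lam) : Prop := z (pair (a, b)) = false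

/-- `z` codes a well-order of order type `α`: the relation `E_z` only relates elements of a set
`S` (its field), and restricted to `S` it is a well-order of order type `α`. -/
def codesWO {lam : Cardinal.{u}} (pair : T lam × T lam ≃ T lam) (z : T lam → Bool)
    (α : Ordinal.{u}) : Prop :=
  ∃ S : Set (T lam), (∀ a b : T lam, Ez pair z a b → a ∈ S ∧ b ∈ S) ∧
    ∃ hwo : IsWellOrder S (fun a b : S => Ez pair z a.1 b.1),
      @Ordinal.type S (fun a b : S => Ez pair z a.1 b.1) hwo = α

/-- The bounded topology on the generalised Cantor space `λ → 2`: basic open sets are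
determined by fixing the values on a bounded (initial) segment of `λ`. -/
def btop (lam : Cardinal.{u}) : TopologicalSpace (T lam → Bool) :=
  TopologicalSpace.generateFrom
    {V | ∃ (b : T lam) (s : T lam → Bool), V = {x | ∀ a : T lam, a < b → x a = s a}}

/-- `A` is a λ-analytic subset of `λ → 2`: it is a continuous image of a λ-Polish space,
i.e. of a completely metrizable space of weight `≤ λ`. -/
def IsLamAnalytic (lam : Cardinal.{u}) (A : Set (T lam → Bool)) : Prop :=
  ∃ (Y : Type u) (tY : TopologicalSpace Y) (m : MetricSpace Y),
    m.toUniformSpace.toTopologicalSpace = tY ∧ @CompleteSpace Y m.toUniformSpace ∧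
    (∃ B : Set (Set Y), @TopologicalSpace.IsTopologicalBasis Y tY B ∧ #B ≤ lam) ∧
    ∃ f : Y → (T lam → Bool), @Continuous Y _ tY (btop lam) f ∧ Set.range f = A

namespace WGCAux

variable {lam : Cardinal.{u}}

/-- The generating family for the bounded topology. -/
def Gset (lam : Cardinal.{u}) : Set (Set (T lam → Bool)) :=
  {V | ∃ (b : T lam) (s : T lam → Bool), V = {x | ∀ a : T lam, a < b → x a = s a}}

/-- Extension of a partial function below `b` by `false`. -/
noncomputable def pext (b : T lam) (t : Set.Iio b → Bool) : T lam → Bool :=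
  fun a => if h : a < b then t ⟨a, h⟩ else false

lemma pext_lt (b : T lam) (t : Set.Iio b → Bool) {a : T lam} (h : a < b) :
    pext b t a = t ⟨a, h⟩ := dif_pos h

lemma basisG (h0 : Nonempty (T lam)) :
    @TopologicalSpace.IsTopologicalBasis _ (btop lam) (Gset lam) := by
  letI := btop lam
  refine ⟨?_, ?_, rfl⟩
  · rintro t₁ ⟨b₁, s₁, rfl⟩ t₂ ⟨b₂, s₂, rfl⟩ x ⟨hx₁, hx₂⟩
    refine ⟨{y | ∀ a : T lam, a < max b₁ b₂ → y a = x a}, ⟨max b₁ b₂, x, rfl⟩,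
      fun a _ => rfl, ?_⟩
    rintro y hy
    exact ⟨fun a ha => (hy a (lt_of_lt_of_le ha (le_max_left _ _))).trans (hx₁ a ha),
      fun a ha => (hy a (lt_of_lt_of_le ha (le_max_right _ _))).trans (hx₂ a ha)⟩
  · apply Set.eq_univ_of_forall
    intro x
    obtain ⟨b⟩ := h0
    exact ⟨_, ⟨b, x, rfl⟩, fun a _ => rfl⟩

lemma exists_Iio_ge {κ : Cardinal.{u}} (hκ : κ < lam) : ∃ b : T lam, κ ≤ #(Set.Iio b) := by
  have h : κ.ord < lam.ord := by rwa [Cardinal.ord_lt_ord]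
  set e := (Ordinal.ToType.mk (o := lam.ord)) with he
  refine ⟨e ⟨κ.ord, h⟩, ?_⟩
  have equiv1 : Set.Iio (e ⟨κ.ord, h⟩) ≃ Set.Iio κ.ord := by
    refine ⟨fun y => ⟨(e.symm y.1).1, ?_⟩, fun o => ⟨e ⟨o.1, lt_trans o.2 h⟩, ?_⟩, ?_, ?_⟩
    · have h2 : e.symm y.1 < e.symm (e ⟨κ.ord, h⟩) := e.symm.lt_iff_lt.2 y.2
      rw [e.symm_apply_apply] at h2
      exact Subtype.coe_lt_coe.2 h2
    · exact e.lt_iff_lt.2 (Subtype.mk_lt_mk.2 o.2)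
    · intro y; ext; exact (congrArg e (Subtype.ext rfl)).trans (e.apply_symm_apply y.1)
    · intro o; ext; simp
  have equiv2 : Set.Iio (e ⟨κ.ord, h⟩) ≃ κ.ord.ToType :=
    equiv1.trans (Ordinal.ToType.mk (o := κ.ord)).toEquiv
  have heq : #(Set.Iio (e ⟨κ.ord, h⟩)) = κ := by
    rw [Cardinal.mk_congr equiv2, Cardinal.mk_toType, Cardinal.card_ord]
  exact heq.ge

lemma mk_fun_bool (b : T lam) : #(Set.Iio b → Bool) = 2 ^ #(Set.Iio b) := by
  simp [Cardinal.mk_arrow]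

/-- The indexing type for basic sets / dense points. -/
abbrev S (lam : Cardinal.{u}) : Type u := Σ b : T lam, (Set.Iio b → Bool)

lemma card_S_le (hsl : lam.IsStrongLimit) : #(S lam) ≤ lam := by
  have hT : #(T lam) = lam := by rw [Cardinal.mk_toType, Cardinal.card_ord]
  calc #(S lam) = Cardinal.sum (fun b : T lam => #(Set.Iio b → Bool)) := Cardinal.mk_sigma _
    _ ≤ Cardinal.sum (fun _ : T lam => lam) := by
        apply Cardinal.sum_le_sum
        intro b
        rw [mk_fun_bool]
        exact (hsl.2 (Cardinal.mk_Iio_ord_toType b)).le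
    _ = #(T lam) * lam := Cardinal.sum_const' _ _
    _ = lam := by rw [hT, Cardinal.mul_eq_self hsl.aleph0_le]

lemma lam_le_of_forall_lt {C : Cardinal.{u}} (hsl : lam.IsStrongLimit)
    (h : ∀ κ < lam, κ ≤ C) : lam ≤ C := by
  by_contra hc
  push_neg at hc
  have h1 : Order.succ C < lam := hsl.isSuccLimit.succ_lt hc
  exact absurd (h _ h1) (not_le.2 (Order.lt_succ C))

/-- Every basis has cardinality at least `lam`. -/
lemma basis_lower (hsl : lam.IsStrongLimit) (h0 : Nonempty (T lam))
    (B : Set (Set (T lam → Bool)))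
    (hB : @TopologicalSpace.IsTopologicalBasis _ (btop lam) B) : lam ≤ #B := by
  letI := btop lam
  apply lam_le_of_forall_lt hsl
  intro κ hκ
  obtain ⟨b, hb⟩ := exists_Iio_ge hκ
  have hopen : ∀ t : Set.Iio b → Bool,
      IsOpen {x : T lam → Bool | ∀ a : T lam, a < b → x a = pext b t a} :=
    fun t => (basisG h0).isOpen ⟨b, pext b t, rfl⟩
  have hex : ∀ t : Set.Iio b → Bool, ∃ v ∈ B, pext b t ∈ v ∧
      v ⊆ {x : T lam → Bool | ∀ a : T lam, a < b → x a = pext b t a} := by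
    intro t
    obtain ⟨v, hvB, hmem, hsub⟩ := hB.exists_subset_of_mem_open
      (show pext b t ∈ {x : T lam → Bool | ∀ a : T lam, a < b → x a = pext b t a} from fun a _ => rfl) (hopen t)
    exact ⟨v, hvB, hmem, hsub⟩
  choose v hvB hmem hsub using hex
  have hinj : Function.Injective v := by
    intro t t' hv
    funext a
    have h1 : pext b t ∈ {x : T lam → Bool | ∀ a : T lam, a < b → x a = pext b t' a} :=
      hsub t' (hv ▸ hmem t)
    have := h1 a.1 a.2
    rw [pext_lt b t a.2, pext_lt b t' a.2] at this
    simpa using this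
  have h2 : #(Set.Iio b → Bool) ≤ #B :=
    Cardinal.mk_le_of_injective (f := fun t => (⟨v t, hvB t⟩ : B))
      (fun t t' h => hinj (Subtype.ext_iff.1 h))
  refine le_trans ?_ h2
  rw [mk_fun_bool]
  exact hb.trans (Cardinal.cantor _).le

lemma card_G_le (hsl : lam.IsStrongLimit) : #(Gset lam) ≤ lam := by
  have hsur : Gset lam ⊆ Set.range (fun p : S lam =>
      {x : T lam → Bool | ∀ a : T lam, a < p.1 → x a = pext p.1 p.2 a}) := by
    rintro V ⟨b, s, rfl⟩
    refine ⟨⟨b, fun a => s a.1⟩, ?_⟩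
    ext x
    constructor
    · intro hx a ha
      rw [hx a ha, pext_lt _ _ ha]
    · intro hx a ha
      rw [hx a ha, pext_lt _ _ ha]
  calc #(Gset lam) ≤ #(Set.range (fun p : S lam =>
        {x : T lam → Bool | ∀ a : T lam, a < p.1 → x a = pext p.1 p.2 a})) :=
        Cardinal.mk_le_mk_of_subset hsur
    _ ≤ #(S lam) := Cardinal.mk_range_le
    _ ≤ lam := card_S_le hsl

/-- The dense set: functions which are a partial function extended by `false`. -/
noncomputable def Dset (lam : Cardinal.{u}) : Set (T lam → Bool) :=
  Set.range (fun p : S lam => pext p.1 p.2)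

lemma dense_D (h0 : Nonempty (T lam)) : @Dense _ (btop lam) (Dset lam) := by
  letI := btop lam
  rw [(basisG h0).dense_iff]
  rintro o ⟨b, s, rfl⟩ _
  refine ⟨pext b (fun a => s a.1), ?_, ⟨b, fun a => s a.1⟩, rfl⟩
  intro a ha
  rw [pext_lt _ _ ha]

lemma card_D_le (hsl : lam.IsStrongLimit) : #(Dset lam) ≤ lam :=
  le_trans Cardinal.mk_range_le (card_S_le hsl)

lemma card_D_ge (hsl : lam.IsStrongLimit) : lam ≤ #(Dset lam) := by
  apply lam_le_of_forall_lt hsl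
  intro κ hκ
  obtain ⟨b, hb⟩ := exists_Iio_ge hκ
  have hinj : Function.Injective (fun t : Set.Iio b → Bool =>
      (⟨pext b t, ⟨⟨b, t⟩, rfl⟩⟩ : Dset lam)) := by
    intro t t' h
    funext a
    have := congrArg (fun f : Dset lam => (f : T lam → Bool) a.1) h
    simp only at this
    rw [pext_lt b t a.2, pext_lt b t' a.2] at this
    simpa using this
  have h2 : #(Set.Iio b → Bool) ≤ #(Dset lam) := Cardinal.mk_le_of_injective hinj
  refine le_trans ?_ h2
  rw [mk_fun_bool]
  exact hb.trans (Cardinal.cantor _).le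

end WGCAux

open WGCAux
theorem weight_of_generalised_cantor (lam : Cardinal.{u})
    (hsl : lam.IsStrongLimit) (hcof : lam.ord.cof = ℵ₀) :
    (∃ B : Set (Set (T lam → Bool)),
      @TopologicalSpace.IsTopologicalBasis _ (btop lam) B ∧ #B = lam) ∧
    (∀ B : Set (Set (T lam → Bool)),
      @TopologicalSpace.IsTopologicalBasis _ (btop lam) B → lam ≤ #B) ∧
    (∃ D : Set (T lam → Bool), @Dense _ (btop lam) D ∧ #D = lam) := by
  have h0 : Nonempty (T lam) := by
    rw [Ordinal.toType_nonempty_iff_ne_zero]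
    simpa using hsl.ne_zero
  refine ⟨⟨Gset lam, basisG h0, le_antisymm (card_G_le hsl)
      (basis_lower hsl h0 _ (basisG h0))⟩,
    fun B hB => basis_lower hsl h0 B hB,
    ⟨Dset lam, dense_D h0, le_antisymm (card_D_le hsl) (card_D_ge hsl)⟩⟩
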